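/- Let (X, 𝒜) be a measurable space, Q a Markov kernel on X, and suppose there exist θ ∈ (0,1), M ∈ ℕ (M ≥ 1) and a probability measure ν such that Q^M(x, A) ≥ θ·ν(A) for every x ∈ X and every A ∈ 𝒜. Then there exists a unique Q-invariant probability measure μ* (i.e. Qμ* = μ*), and for every probability measure μ on X and every n ≥ 1, ‖Q^n μ − μ*‖_TV ≤ C·α^n, where α = (1 − θ)^{1/M} and C = 2(1 − θ)^{-1}. -/

import Mathlib

open MeasureTheory ProbabilityTheory

/-- The `n`-fold action of a kernel `Q` on a measure: `Q^n μ`. In particular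
`kernelIter Q n (Measure.dirac x) A` is the `n`-step transition probability `Qⁿ(x, A)`. -/
noncomputable def kernelIter {X : Type*} [MeasurableSpace X] (Q : Kernel X X)
    (n : ℕ) (μ : Measure X) : Measure X :=
  (fun m : Measure X => m.bind ⇑Q)^[n] μ

/-- The total variation norm `‖μ − ν‖_TV = (μ−ν)⁺(X) + (μ−ν)⁻(X)` of the difference of
two (finite) measures, expressed via the Jordan decomposition of `μ − ν`, whose positive
part is the (truncated) measure difference `μ - ν` and negative part is `ν - μ`. -/
noncomputable def tvDist {X : Type*} [MeasurableSpace X] (μ ν : Measure X) : ENNReal :=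
  (μ - ν) Set.univ + (ν - μ) Set.univ

namespace DoeblinAux

open ENNReal

variable {X : Type*} [MeasurableSpace X]

lemma measure_add_right_cancel {a b c : Measure X} [IsFiniteMeasure c] (h : a + c = b + c) :
    a = b := by
  ext s hs
  have h' : a s + c s = b s + c s := by
    rw [← Measure.add_apply, ← Measure.add_apply, h]
  exact WithTop.add_right_cancel (measure_ne_top c s) h'

lemma sub_apply_of_hahn {μ ν : Measure X} [IsFiniteMeasure μ] [IsFiniteMeasure ν] {s : Set X}
    (hs : MeasurableSet s) (h1 : ∀ t, MeasurableSet t → t ⊆ s → ν t ≤ μ t)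
    (h2 : ∀ t, MeasurableSet t → t ⊆ sᶜ → μ t ≤ ν t) {A : Set X} (hA : MeasurableSet A) :
    (μ - ν) A = μ (A ∩ s) - ν (A ∩ s) := by
  have hres : ν.restrict s ≤ μ.restrict s := by
    rw [Measure.le_iff]
    intro t ht
    rw [Measure.restrict_apply ht, Measure.restrict_apply ht]
    exact h1 _ (ht.inter hs) Set.inter_subset_right
  have hres' : μ.restrict sᶜ ≤ ν.restrict sᶜ := by
    rw [Measure.le_iff]
    intro t ht
    rw [Measure.restrict_apply ht, Measure.restrict_apply ht]
    exact h2 _ (ht.inter hs.compl) Set.inter_subset_right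
  have hzero : (μ - ν) (A ∩ sᶜ) = 0 :=
    measure_mono_null Set.inter_subset_right
      (Measure.sub_apply_eq_zero_of_restrict_le_restrict hres' hs.compl)
  have key : (μ - ν) (A ∩ s) = μ (A ∩ s) - ν (A ∩ s) := by
    calc (μ - ν) (A ∩ s) = (μ - ν).restrict s A := (Measure.restrict_apply hA).symm
      _ = (μ.restrict s - ν.restrict s) A := by
          rw [Measure.restrict_sub_eq_restrict_sub_restrict hs]
      _ = μ.restrict s A - ν.restrict s A := Measure.sub_apply hA hres
      _ = μ (A ∩ s) - ν (A ∩ s) := by rw [Measure.restrict_apply hA, Measure.restrict_apply hA]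
  calc (μ - ν) A = (μ - ν) (A ∩ s) + (μ - ν) (A \ s) := (measure_inter_add_diff A hs).symm
    _ = μ (A ∩ s) - ν (A ∩ s) := by
        rw [Set.diff_eq, hzero, add_zero, key]

lemma add_sub_comm (μ ν : Measure X) [IsFiniteMeasure μ] [IsFiniteMeasure ν] :
    μ + (ν - μ) = ν + (μ - ν) := by
  obtain ⟨s, hs, h1, h2⟩ := hahn_decomposition (μ := μ) (ν := ν)
  ext A hA
  have hsub1 : (μ - ν) A = μ (A ∩ s) - ν (A ∩ s) := sub_apply_of_hahn hs h1 h2 hA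
  have hsub2 : (ν - μ) A = ν (A ∩ sᶜ) - μ (A ∩ sᶜ) := by
    refine sub_apply_of_hahn hs.compl h2 (fun t ht hts => h1 t ht ?_) hA
    rwa [compl_compl] at hts
  rw [Measure.add_apply, Measure.add_apply, hsub1, hsub2,
    ← measure_inter_add_diff A hs (μ := μ), ← measure_inter_add_diff A hs (μ := ν), Set.diff_eq]
  have hba : ν (A ∩ s) ≤ μ (A ∩ s) := h1 _ (hA.inter hs) Set.inter_subset_right
  have hbd : μ (A ∩ sᶜ) ≤ ν (A ∩ sᶜ) := h2 _ (hA.inter hs.compl) Set.inter_subset_right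
  rw [add_assoc, add_tsub_cancel_of_le hbd, add_comm (ν (A ∩ s)), add_assoc,
    add_tsub_cancel_of_le hba, add_comm (μ (A ∩ s))]

lemma sub_univ_comm (μ ν : Measure X) [IsProbabilityMeasure μ] [IsProbabilityMeasure ν] :
    (μ - ν) Set.univ = (ν - μ) Set.univ := by
  have h := congrArg (fun m : Measure X => m Set.univ) (add_sub_comm μ ν)
  simp only [Measure.add_apply, measure_univ] at h
  exact ((ENNReal.add_right_inj one_ne_top).mp h).symm

lemma eq_of_tvDist_zero {μ ν : Measure X} [IsFiniteMeasure μ] [IsFiniteMeasure ν]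
    (h : tvDist μ ν = 0) : μ = ν := by
  rw [tvDist, add_eq_zero] at h
  have h1 : μ - ν = 0 := Measure.measure_univ_eq_zero.mp h.1
  have h2 : ν - μ = 0 := Measure.measure_univ_eq_zero.mp h.2
  have := add_sub_comm μ ν
  rwa [h1, h2, add_zero, add_zero] at this

lemma tvDist_le_two (μ ν : Measure X) [IsProbabilityMeasure μ] [IsProbabilityMeasure ν] :
    tvDist μ ν ≤ 2 := by
  have h1 : (μ - ν) Set.univ ≤ 1 := le_trans (Measure.sub_le (ν := ν) Set.univ) measure_univ.le
  have h2 : (ν - μ) Set.univ ≤ 1 := le_trans (Measure.sub_le (ν := μ) Set.univ) measure_univ.le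
  calc tvDist μ ν ≤ 1 + 1 := add_le_add h1 h2
    _ = 2 := one_add_one_eq_two

set_option linter.unusedSectionVars false
open ENNReal
variable {X : Type*} [MeasurableSpace X] (Q : Kernel X X) [IsMarkovKernel Q]

lemma bind_add' (μ ν : Measure X) : (μ + ν).bind ⇑Q = μ.bind ⇑Q + ν.bind ⇑Q := by
  ext s hs
  rw [Measure.bind_apply hs Q.measurable.aemeasurable, Measure.add_apply, lintegral_add_measure,
    Measure.bind_apply hs Q.measurable.aemeasurable, Measure.bind_apply hs Q.measurable.aemeasurable]

lemma bind_smul' (c : ℝ≥0∞) (μ : Measure X) : (c • μ).bind ⇑Q = c • μ.bind ⇑Q := by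
  ext s hs
  simp only [Measure.bind_apply hs Q.measurable.aemeasurable, Measure.smul_apply, lintegral_smul_measure,
    smul_eq_mul]

lemma bind_sum' (μs : ℕ → Measure X) :
    (Measure.sum μs).bind ⇑Q = Measure.sum (fun k => (μs k).bind ⇑Q) := by
  ext s hs
  rw [Measure.bind_apply hs Q.measurable.aemeasurable, lintegral_sum_measure, Measure.sum_apply _ hs]
  exact tsum_congr fun k => (Measure.bind_apply hs Q.measurable.aemeasurable).symm

lemma bind_mono' {μ ν : Measure X} (h : μ ≤ ν) : μ.bind ⇑Q ≤ ν.bind ⇑Q := by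
  rw [Measure.le_iff]
  intro s hs
  rw [Measure.bind_apply hs Q.measurable.aemeasurable, Measure.bind_apply hs Q.measurable.aemeasurable]
  exact lintegral_mono' h le_rfl

lemma bind_univ' (μ : Measure X) : (μ.bind ⇑Q) Set.univ = μ Set.univ := by
  rw [Measure.bind_apply MeasurableSet.univ Q.measurable.aemeasurable]
  simp [measure_univ]

@[simp] lemma kernelIter_zero (μ : Measure X) : kernelIter Q 0 μ = μ := rfl

lemma kernelIter_succ (n : ℕ) (μ : Measure X) :
    kernelIter Q (n + 1) μ = (kernelIter Q n μ).bind ⇑Q :=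
  Function.iterate_succ_apply' _ _ _

lemma kernelIter_succ' (n : ℕ) (μ : Measure X) :
    kernelIter Q (n + 1) μ = kernelIter Q n (μ.bind ⇑Q) :=
  Function.iterate_succ_apply _ _ _

lemma kernelIter_add' (m n : ℕ) (μ : Measure X) :
    kernelIter Q (m + n) μ = kernelIter Q m (kernelIter Q n μ) :=
  Function.iterate_add_apply _ _ _ _

lemma kernelIter_addMeas (n : ℕ) (μ ν : Measure X) :
    kernelIter Q n (μ + ν) = kernelIter Q n μ + kernelIter Q n ν := by
  induction n with
  | zero => rfl
  | succ n ih => rw [kernelIter_succ, ih, bind_add', kernelIter_succ, kernelIter_succ]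

lemma kernelIter_smul (n : ℕ) (c : ℝ≥0∞) (μ : Measure X) :
    kernelIter Q n (c • μ) = c • kernelIter Q n μ := by
  induction n with
  | zero => rfl
  | succ n ih => rw [kernelIter_succ, ih, bind_smul', kernelIter_succ]

lemma kernelIter_sum (n : ℕ) (μs : ℕ → Measure X) :
    kernelIter Q n (Measure.sum μs) = Measure.sum (fun k => kernelIter Q n (μs k)) := by
  induction n with
  | zero => rfl
  | succ n ih =>
      rw [kernelIter_succ, ih, bind_sum']
      exact congrArg _ (funext fun k => (kernelIter_succ Q n (μs k)).symm)

lemma kernelIter_univ (n : ℕ) (μ : Measure X) :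
    kernelIter Q n μ Set.univ = μ Set.univ := by
  induction n with
  | zero => rfl
  | succ n ih => rw [kernelIter_succ, bind_univ', ih]

lemma isFiniteMeasure_kernelIter (n : ℕ) (μ : Measure X) [IsFiniteMeasure μ] :
    IsFiniteMeasure (kernelIter Q n μ) :=
  ⟨by rw [kernelIter_univ]; exact measure_lt_top μ _⟩

lemma isProbabilityMeasure_kernelIter (n : ℕ) (μ : Measure X) [IsProbabilityMeasure μ] :
    IsProbabilityMeasure (kernelIter Q n μ) :=
  ⟨by rw [kernelIter_univ]; exact measure_univ⟩

/-- The iterated kernel. -/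
noncomputable def iterK (Q : Kernel X X) : ℕ → Kernel X X
  | 0 => Kernel.id
  | (n + 1) => Q.comp (iterK Q n)

instance isMarkovKernel_iterK (n : ℕ) : IsMarkovKernel (iterK Q n) := by
  induction n with
  | zero => rw [iterK]; infer_instance
  | succ n ih => rw [iterK]; infer_instance

lemma kernelIter_eq_bind (n : ℕ) (μ : Measure X) :
    kernelIter Q n μ = μ.bind ⇑(iterK Q n) := by
  induction n with
  | zero =>
      rw [iterK]
      have : ⇑(Kernel.id : Kernel X X) = Measure.dirac := funext fun x => Kernel.id_apply x
      rw [this, Measure.bind_dirac]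
      rfl
  | succ n ih =>
      rw [kernelIter_succ, ih, iterK,
        Measure.bind_bind (Kernel.measurable _).aemeasurable Q.measurable.aemeasurable]
      exact congrArg _ (funext fun x => (Kernel.comp_apply Q (iterK Q n) x).symm)

lemma kernelIter_dirac_eq (n : ℕ) (x : X) :
    kernelIter Q n (Measure.dirac x) = iterK Q n x := by
  rw [kernelIter_eq_bind, Measure.dirac_bind (Kernel.measurable _)]


section Minorization

variable (θ : ℝ) (M : ℕ) (ν : Measure X) [IsProbabilityMeasure ν]

/-- Residual measure after removing the minorizing part. -/
noncomputable def resid (μ : Measure X) : Measure X :=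
  kernelIter Q M μ - (ENNReal.ofReal θ * μ Set.univ) • ν

variable {Q θ M ν}
variable (hθ : θ ∈ Set.Ioo (0:ℝ) 1)
variable (hmin' : ∀ x : X, ∀ A : Set X, MeasurableSet A →
    ENNReal.ofReal θ * ν A ≤ kernelIter Q M (Measure.dirac x) A)

include hmin' in
lemma minor_meas (μ : Measure X) :
    (ENNReal.ofReal θ * μ Set.univ) • ν ≤ kernelIter Q M μ := by
  rw [Measure.le_iff]
  intro A hA
  rw [Measure.smul_apply, smul_eq_mul, kernelIter_eq_bind, Measure.bind_apply hA
    (Kernel.measurable _).aemeasurable]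
  have hx : ∀ x : X, ENNReal.ofReal θ * ν A ≤ iterK Q M x A := fun x => by
    have h := hmin' x A hA
    rwa [kernelIter_dirac_eq] at h
  calc ENNReal.ofReal θ * μ Set.univ * ν A = ∫⁻ _, ENNReal.ofReal θ * ν A ∂μ := by
        rw [lintegral_const]; ring
    _ ≤ ∫⁻ x, iterK Q M x A ∂μ := lintegral_mono hx

lemma isFiniteMeasure_smul_nu (c : ℝ≥0∞) (hc : c ≠ ⊤) : IsFiniteMeasure (c • ν) :=
  ⟨by rw [Measure.smul_apply, smul_eq_mul, measure_univ, mul_one]; exact hc.lt_top⟩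

include hmin' in
lemma decomp_meas (μ : Measure X) [IsFiniteMeasure μ] :
    kernelIter Q M μ = resid Q θ M ν μ + (ENNReal.ofReal θ * μ Set.univ) • ν := by
  have : IsFiniteMeasure ((ENNReal.ofReal θ * μ Set.univ) • ν) :=
    isFiniteMeasure_smul_nu _ (ENNReal.mul_ne_top ofReal_ne_top (measure_ne_top μ _))
  exact (Measure.sub_add_cancel_of_le (minor_meas hmin' μ)).symm

include hθ hmin' in
lemma resid_univ (μ : Measure X) [IsFiniteMeasure μ] :
    resid Q θ M ν μ Set.univ = ENNReal.ofReal (1 - θ) * μ Set.univ := by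
  have : IsFiniteMeasure ((ENNReal.ofReal θ * μ Set.univ) • ν) :=
    isFiniteMeasure_smul_nu _ (ENNReal.mul_ne_top ofReal_ne_top (measure_ne_top μ _))
  rw [resid, Measure.sub_apply MeasurableSet.univ (minor_meas hmin' μ),
    kernelIter_univ, Measure.smul_apply, smul_eq_mul,
    (measure_univ : ν Set.univ = 1), mul_one]
  apply ENNReal.sub_eq_of_eq_add (ENNReal.mul_ne_top ofReal_ne_top (measure_ne_top μ _))
  rw [← add_mul, ← ENNReal.ofReal_add (by linarith [hθ.2]) hθ.1.le]
  norm_num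

include hθ hmin' in
lemma contraction (μ₁ μ₂ : Measure X) [IsProbabilityMeasure μ₁] [IsProbabilityMeasure μ₂] :
    tvDist (kernelIter Q M μ₁) (kernelIter Q M μ₂)
      ≤ ENNReal.ofReal (1 - θ) * tvDist μ₁ μ₂ := by
  set δ₁ := μ₁ - μ₂ with hδ₁
  set δ₂ := μ₂ - μ₁ with hδ₂
  have hfin1 : IsFiniteMeasure δ₁ := Measure.isFiniteMeasure_sub
  have hfin2 : IsFiniteMeasure δ₂ := Measure.isFiniteMeasure_sub
  have hmass : δ₂ Set.univ = δ₁ Set.univ := sub_univ_comm μ₂ μ₁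
  -- key identity
  have hid : μ₁ + δ₂ = μ₂ + δ₁ := add_sub_comm μ₁ μ₂
  have hid2 : kernelIter Q M μ₁ + kernelIter Q M δ₂
      = kernelIter Q M μ₂ + kernelIter Q M δ₁ := by
    rw [← kernelIter_addMeas, ← kernelIter_addMeas, hid]
  have hd1 := decomp_meas hmin' δ₁
  have hd2 := decomp_meas hmin' δ₂
  rw [hmass] at hd2
  have hkey : kernelIter Q M μ₁ + resid Q θ M ν δ₂ = kernelIter Q M μ₂ + resid Q θ M ν δ₁ := by
    have : IsFiniteMeasure ((ENNReal.ofReal θ * δ₁ Set.univ) • ν) :=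
      isFiniteMeasure_smul_nu _ (ENNReal.mul_ne_top ofReal_ne_top (measure_ne_top δ₁ _))
    apply measure_add_right_cancel (c := (ENNReal.ofReal θ * δ₁ Set.univ) • ν)
    calc kernelIter Q M μ₁ + resid Q θ M ν δ₂ + (ENNReal.ofReal θ * δ₁ Set.univ) • ν
        = kernelIter Q M μ₁ + kernelIter Q M δ₂ := by rw [add_assoc, ← hd2]
      _ = kernelIter Q M μ₂ + kernelIter Q M δ₁ := hid2
      _ = kernelIter Q M μ₂ + resid Q θ M ν δ₁ + (ENNReal.ofReal θ * δ₁ Set.univ) • ν := by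
          rw [add_assoc, ← hd1]
  have h1 : (kernelIter Q M μ₁ - kernelIter Q M μ₂) Set.univ
      ≤ ENNReal.ofReal (1 - θ) * δ₁ Set.univ := by
    have hle : kernelIter Q M μ₁ ≤ resid Q θ M ν δ₁ + kernelIter Q M μ₂ := by
      calc kernelIter Q M μ₁ ≤ kernelIter Q M μ₁ + resid Q θ M ν δ₂ :=
            Measure.le_add_right le_rfl
        _ = kernelIter Q M μ₂ + resid Q θ M ν δ₁ := hkey
        _ = resid Q θ M ν δ₁ + kernelIter Q M μ₂ := add_comm _ _
    calc (kernelIter Q M μ₁ - kernelIter Q M μ₂) Set.univ ≤ resid Q θ M ν δ₁ Set.univ :=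
          Measure.sub_le_of_le_add hle _
      _ = ENNReal.ofReal (1 - θ) * δ₁ Set.univ := resid_univ hθ hmin' δ₁
  have h2 : (kernelIter Q M μ₂ - kernelIter Q M μ₁) Set.univ
      ≤ ENNReal.ofReal (1 - θ) * δ₂ Set.univ := by
    have hle : kernelIter Q M μ₂ ≤ resid Q θ M ν δ₂ + kernelIter Q M μ₁ := by
      calc kernelIter Q M μ₂ ≤ kernelIter Q M μ₂ + resid Q θ M ν δ₁ :=
            Measure.le_add_right le_rfl
        _ = kernelIter Q M μ₁ + resid Q θ M ν δ₂ := hkey.symm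
        _ = resid Q θ M ν δ₂ + kernelIter Q M μ₁ := add_comm _ _
    calc (kernelIter Q M μ₂ - kernelIter Q M μ₁) Set.univ ≤ resid Q θ M ν δ₂ Set.univ :=
          Measure.sub_le_of_le_add hle _
      _ = ENNReal.ofReal (1 - θ) * δ₂ Set.univ := by rw [resid_univ hθ hmin' δ₂, hmass]
  calc tvDist (kernelIter Q M μ₁) (kernelIter Q M μ₂)
      ≤ ENNReal.ofReal (1 - θ) * δ₁ Set.univ + ENNReal.ofReal (1 - θ) * δ₂ Set.univ :=
        add_le_add h1 h2
    _ = ENNReal.ofReal (1 - θ) * tvDist μ₁ μ₂ := by rw [tvDist, mul_add, hmass]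

include hθ hmin' in
lemma contraction_iter (k : ℕ) (μ₁ μ₂ : Measure X)
    [IsProbabilityMeasure μ₁] [IsProbabilityMeasure μ₂] :
    tvDist (kernelIter Q (k * M) μ₁) (kernelIter Q (k * M) μ₂)
      ≤ ENNReal.ofReal (1 - θ) ^ k * tvDist μ₁ μ₂ := by
  induction k with
  | zero => simpa using le_rfl
  | succ k ih =>
      have hp1 := isProbabilityMeasure_kernelIter Q (k * M) μ₁
      have hp2 := isProbabilityMeasure_kernelIter Q (k * M) μ₂
      have : (k + 1) * M = M + k * M := by ring
      rw [this, kernelIter_add', kernelIter_add']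
      calc tvDist (kernelIter Q M (kernelIter Q (k * M) μ₁))
            (kernelIter Q M (kernelIter Q (k * M) μ₂))
          ≤ ENNReal.ofReal (1 - θ) * tvDist (kernelIter Q (k * M) μ₁) (kernelIter Q (k * M) μ₂) :=
            contraction hθ hmin' _ _
        _ ≤ ENNReal.ofReal (1 - θ) * (ENNReal.ofReal (1 - θ) ^ k * tvDist μ₁ μ₂) :=
            mul_le_mul_right ih _
        _ = ENNReal.ofReal (1 - θ) ^ (k + 1) * tvDist μ₁ μ₂ := by ring

end Minorization

section Sums

lemma sum_shift (f : ℕ → Measure X) :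
    Measure.sum f = f 0 + Measure.sum (fun k => f (k + 1)) := by
  ext s hs
  rw [Measure.add_apply, Measure.sum_apply _ hs, Measure.sum_apply _ hs,
    tsum_eq_zero_add' ENNReal.summable]

lemma sum_addMeas (f g : ℕ → Measure X) :
    Measure.sum (fun k => f k + g k) = Measure.sum f + Measure.sum g := by
  ext s hs
  rw [Measure.add_apply, Measure.sum_apply _ hs, Measure.sum_apply _ hs,
    Measure.sum_apply _ hs, ← ENNReal.tsum_add]
  exact tsum_congr fun k => Measure.add_apply _ _ _

lemma sum_smul_const (c : ℕ → ℝ≥0∞) (ν : Measure X) :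
    Measure.sum (fun k => c k • ν) = (∑' k, c k) • ν := by
  ext s hs
  rw [Measure.sum_apply _ hs, Measure.smul_apply, smul_eq_mul, ← ENNReal.tsum_mul_right]
  exact tsum_congr fun k => by rw [Measure.smul_apply, smul_eq_mul]

end Sums

section FixedPoint

variable (θ : ℝ) (M : ℕ) (ν : Measure X)

/-- The sequence of residual measures. -/
noncomputable def rho : ℕ → Measure X
  | 0 => ν
  | (k + 1) => resid Q θ M ν (rho k)

variable {Q θ M ν} [IsProbabilityMeasure ν]
variable (hθ : θ ∈ Set.Ioo (0:ℝ) 1)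
variable (hmin' : ∀ x : X, ∀ A : Set X, MeasurableSet A →
    ENNReal.ofReal θ * ν A ≤ kernelIter Q M (Measure.dirac x) A)

include hθ hmin' in
lemma rho_univ (k : ℕ) : rho Q θ M ν k Set.univ = ENNReal.ofReal (1 - θ) ^ k := by
  induction k with
  | zero => rw [rho, pow_zero]; exact measure_univ
  | succ k ih =>
      have : IsFiniteMeasure (rho Q θ M ν k) := ⟨by rw [ih]; exact ENNReal.pow_lt_top ofReal_lt_top⟩
      rw [rho, resid_univ hθ hmin', ih, pow_succ, mul_comm]

include hθ hmin' in
lemma isFiniteMeasure_rho (k : ℕ) : IsFiniteMeasure (rho Q θ M ν k) :=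
  ⟨by rw [rho_univ hθ hmin']; exact ENNReal.pow_lt_top ofReal_lt_top⟩

include hθ in
lemma one_sub_ofReal : 1 - ENNReal.ofReal (1 - θ) = ENNReal.ofReal θ := by
  refine ENNReal.sub_eq_of_eq_add ofReal_ne_top ?_
  rw [← ENNReal.ofReal_add hθ.1.le (by linarith [hθ.2])]
  norm_num

include hθ in
lemma tsum_geom : (∑' k : ℕ, ENNReal.ofReal (1 - θ) ^ k) = (ENNReal.ofReal θ)⁻¹ := by
  rw [ENNReal.tsum_geometric, one_sub_ofReal hθ]

include hθ hmin' in
lemma exists_fixed_M : ∃ μ0 : Measure X, IsProbabilityMeasure μ0 ∧ kernelIter Q M μ0 = μ0 := by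
  have hfin : ∀ k, IsFiniteMeasure (rho Q θ M ν k) := isFiniteMeasure_rho hθ hmin'
  have hθ0 : ENNReal.ofReal θ ≠ 0 := (ENNReal.ofReal_pos.mpr hθ.1).ne'
  refine ⟨Measure.sum (fun k => ENNReal.ofReal θ • rho Q θ M ν k), ⟨?_⟩, ?_⟩
  · rw [Measure.sum_apply _ MeasurableSet.univ]
    have : ∀ k, (ENNReal.ofReal θ • rho Q θ M ν k) Set.univ
        = ENNReal.ofReal θ * ENNReal.ofReal (1 - θ) ^ k := fun k => by
      rw [Measure.smul_apply, smul_eq_mul, rho_univ hθ hmin']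
    rw [tsum_congr this, ENNReal.tsum_mul_left, tsum_geom hθ,
      ENNReal.mul_inv_cancel hθ0 ofReal_ne_top]
  · have hstep : ∀ k, kernelIter Q M (ENNReal.ofReal θ • rho Q θ M ν k)
        = ENNReal.ofReal θ • rho Q θ M ν (k + 1)
          + (ENNReal.ofReal θ * (ENNReal.ofReal θ * ENNReal.ofReal (1 - θ) ^ k)) • ν := fun k => by
      have := hfin k
      rw [kernelIter_smul, decomp_meas hmin' (rho Q θ M ν k), smul_add, rho_univ hθ hmin',
        smul_smul]
      rfl
    rw [kernelIter_sum, funext hstep, sum_addMeas, sum_smul_const, ENNReal.tsum_mul_left,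
      ENNReal.tsum_mul_left, tsum_geom hθ, ENNReal.mul_inv_cancel hθ0 ofReal_ne_top, mul_one]
    conv_rhs => rw [sum_shift]
    rw [add_comm]
    congr 1

end FixedPoint

lemma real_bound {θ : ℝ} (hθ : θ ∈ Set.Ioo (0:ℝ) 1) {M : ℕ} (hM : 1 ≤ M) {n q r : ℕ}
    (hn : M * q + r = n) (hr : r < M) :
    (1 - θ) ^ q * 2 ≤ 2 * (1 - θ)⁻¹ * ((1 - θ) ^ ((1:ℝ) / M)) ^ n := by
  set x := 1 - θ with hx
  have hx0 : 0 < x := by simp only [hx]; linarith [hθ.2]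
  have hx1 : x ≤ 1 := by simp only [hx]; linarith [hθ.1]
  have hM0 : (0:ℝ) < M := Nat.cast_pos.mpr hM
  have hqn : (n:ℝ) / M - 1 ≤ q := by
    have h1 : (n:ℝ) < M * (q + 1) := by
      have h : n < M * (q + 1) := by
        rw [Nat.mul_add, Nat.mul_one]
        omega
      exact_mod_cast h
    have h2 : (n:ℝ) / M < q + 1 := by
      rw [div_lt_iff₀ hM0]; linarith [h1]
    linarith
  have key : x ^ (q:ℝ) ≤ x ^ ((n:ℝ) / M - 1) :=
    Real.rpow_le_rpow_of_exponent_ge hx0 hx1 hqn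
  have hrhs : (x ^ ((1:ℝ) / M)) ^ n = x ^ ((n:ℝ) / M) := by
    rw [← Real.rpow_natCast (x ^ ((1:ℝ) / M)) n, ← Real.rpow_mul hx0.le]
    congr 1
    field_simp
  have hsub : x ^ ((n:ℝ) / M - 1) = x⁻¹ * x ^ ((n:ℝ) / M) := by
    rw [Real.rpow_sub hx0, Real.rpow_one, div_eq_mul_inv, mul_comm]
  calc x ^ q * 2 = 2 * x ^ (q:ℝ) := by rw [Real.rpow_natCast]; ring
    _ ≤ 2 * x ^ ((n:ℝ) / M - 1) := by nlinarith [key]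
    _ = 2 * x⁻¹ * (x ^ ((1:ℝ) / M)) ^ n := by rw [hsub, hrhs]; ring

end DoeblinAux

set_option maxHeartbeats 1000000 in
/-- **Doeblin's theorem.** If some iterate `Q^M` of a Markov kernel satisfies the
minorization `Q^M(x, A) ≥ θ·ν(A)` with `θ ∈ (0,1)` and `ν` a probability measure, then
`Q` has a unique invariant probability measure `μ*`, and for every probability measure `μ`
and `n ≥ 1`, `‖Q^n μ − μ*‖_TV ≤ C·αⁿ` with `α = (1−θ)^{1/M}` and `C = 2(1−θ)⁻¹`. -/
theorem doeblin_theorem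
    {X : Type*} [MeasurableSpace X]
    (Q : Kernel X X) [IsMarkovKernel Q]
    (θ : ℝ) (hθ : θ ∈ Set.Ioo (0:ℝ) 1)
    (M : ℕ) (hM : 1 ≤ M)
    (ν : Measure X) [IsProbabilityMeasure ν]
    (hmin : ∀ x : X, ∀ A : Set X, MeasurableSet A →
      ENNReal.ofReal θ * ν A ≤ kernelIter Q M (Measure.dirac x) A) :
    ∃ μstar : Measure X,
      (IsProbabilityMeasure μstar ∧ μstar.bind ⇑Q = μstar) ∧
      (∀ μ' : Measure X, IsProbabilityMeasure μ' → μ'.bind ⇑Q = μ' → μ' = μstar) ∧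
      (∀ μ : Measure X, IsProbabilityMeasure μ → ∀ n : ℕ, 1 ≤ n →
        tvDist (kernelIter Q n μ) μstar
          ≤ ENNReal.ofReal (2 * (1 - θ)⁻¹ * ((1 - θ) ^ ((1:ℝ) / M)) ^ n)) := by
  classical
  obtain ⟨μ0, hμ0prob, hμ0fix⟩ := DoeblinAux.exists_fixed_M hθ hmin
  set μstar : Measure X := (M : ENNReal)⁻¹ • ∑ j ∈ Finset.range M, kernelIter Q j μ0 with hμstar
  have hMne0 : (M : ENNReal) ≠ 0 := Nat.cast_ne_zero.mpr (by omega)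
  have hMneT : (M : ENNReal) ≠ ⊤ := ENNReal.natCast_ne_top M
  -- μstar is a probability measure
  have hprob : IsProbabilityMeasure μstar := by
    constructor
    rw [hμstar, Measure.smul_apply, smul_eq_mul, Measure.finset_sum_apply]
    have : ∀ j ∈ Finset.range M, kernelIter Q j μ0 Set.univ = 1 := fun j _ => by
      rw [DoeblinAux.kernelIter_univ]; exact measure_univ
    rw [Finset.sum_congr rfl this, Finset.sum_const, Finset.card_range, nsmul_eq_mul, mul_one,
      ENNReal.inv_mul_cancel hMne0 hMneT]
  -- μstar is invariant
  have hinv : μstar.bind ⇑Q = μstar := by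
    have hbind_sum : (∑ j ∈ Finset.range M, kernelIter Q j μ0).bind ⇑Q
        = ∑ j ∈ Finset.range M, kernelIter Q (j + 1) μ0 := by
      induction' (Finset.range M) using Finset.induction_on with a s ha ih
      · simp [Measure.bind_zero_left]
      · rw [Finset.sum_insert ha, DoeblinAux.bind_add' Q, ih, Finset.sum_insert ha,
          DoeblinAux.kernelIter_succ]
    have hshift : ∑ j ∈ Finset.range M, kernelIter Q (j + 1) μ0
        = ∑ j ∈ Finset.range M, kernelIter Q j μ0 := by
      have hfin : IsFiniteMeasure (kernelIter Q 0 μ0) := by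
        rw [DoeblinAux.kernelIter_zero]; infer_instance
      apply DoeblinAux.measure_add_right_cancel (c := kernelIter Q 0 μ0)
      calc (∑ j ∈ Finset.range M, kernelIter Q (j + 1) μ0) + kernelIter Q 0 μ0
          = ∑ j ∈ Finset.range (M + 1), kernelIter Q j μ0 := (Finset.sum_range_succ' (fun j => kernelIter Q j μ0) M).symm
        _ = (∑ j ∈ Finset.range M, kernelIter Q j μ0) + kernelIter Q M μ0 :=
            Finset.sum_range_succ (fun j => kernelIter Q j μ0) M
        _ = (∑ j ∈ Finset.range M, kernelIter Q j μ0) + kernelIter Q 0 μ0 := by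
            rw [hμ0fix, DoeblinAux.kernelIter_zero]
    rw [hμstar, DoeblinAux.bind_smul' Q, hbind_sum, hshift]
  -- iterates of μstar are μstar
  have hiter : ∀ n : ℕ, kernelIter Q n μstar = μstar := fun n => by
    induction n with
    | zero => rfl
    | succ n ih => rw [DoeblinAux.kernelIter_succ, ih, hinv]
  -- the convergence bound
  have hbound : ∀ μ : Measure X, IsProbabilityMeasure μ → ∀ n : ℕ, 1 ≤ n →
      tvDist (kernelIter Q n μ) μstar
        ≤ ENNReal.ofReal (2 * (1 - θ)⁻¹ * ((1 - θ) ^ ((1:ℝ) / M)) ^ n) := by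
    intro μ hpμ n hn
    set q := n / M with hq
    set r := n % M with hr
    have hnqr : M * q + r = n := Nat.div_add_mod n M
    have hrM : r < M := Nat.mod_lt n (by omega)
    have h2 : kernelIter Q n μ = kernelIter Q (q * M) (kernelIter Q r μ) := by
      rw [← DoeblinAux.kernelIter_add']
      congr 1
      rw [Nat.mul_comm]
      omega
    have hpr : IsProbabilityMeasure (kernelIter Q r μ) :=
      DoeblinAux.isProbabilityMeasure_kernelIter Q r μ
    have hpr' : IsProbabilityMeasure (kernelIter Q r μstar) :=
      DoeblinAux.isProbabilityMeasure_kernelIter Q r μstar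
    have hcmp : tvDist (kernelIter Q n μ) μstar
        ≤ ENNReal.ofReal (1 - θ) ^ q * tvDist (kernelIter Q r μ) (kernelIter Q r μstar) := by
      rw [h2]
      have := hiter n
      calc tvDist (kernelIter Q (q * M) (kernelIter Q r μ)) μstar
          = tvDist (kernelIter Q (q * M) (kernelIter Q r μ))
              (kernelIter Q (q * M) (kernelIter Q r μstar)) := by
            rw [hiter r, hiter (q * M)]
        _ ≤ ENNReal.ofReal (1 - θ) ^ q * tvDist (kernelIter Q r μ) (kernelIter Q r μstar) :=
            DoeblinAux.contraction_iter hθ hmin q _ _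
    have htv2 : tvDist (kernelIter Q r μ) (kernelIter Q r μstar) ≤ 2 :=
      DoeblinAux.tvDist_le_two _ _
    calc tvDist (kernelIter Q n μ) μstar
        ≤ ENNReal.ofReal (1 - θ) ^ q * 2 := le_trans hcmp (mul_le_mul_right htv2 _)
      _ = ENNReal.ofReal ((1 - θ) ^ q * 2) := by
          rw [ENNReal.ofReal_mul (pow_nonneg (by linarith [hθ.2]) q),
            ENNReal.ofReal_pow (by linarith [hθ.2]),
            ENNReal.ofReal_ofNat]
      _ ≤ ENNReal.ofReal (2 * (1 - θ)⁻¹ * ((1 - θ) ^ ((1:ℝ) / M)) ^ n) :=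
          ENNReal.ofReal_le_ofReal (DoeblinAux.real_bound hθ hM hnqr hrM)
  -- uniqueness
  have huniq : ∀ μ' : Measure X, IsProbabilityMeasure μ' → μ'.bind ⇑Q = μ' → μ' = μstar := by
    intro μ' hpμ' hμ'inv
    have hiter' : ∀ n : ℕ, kernelIter Q n μ' = μ' := fun n => by
      induction n with
      | zero => rfl
      | succ n ih => rw [DoeblinAux.kernelIter_succ, ih, hμ'inv]
    have hcon := DoeblinAux.contraction_iter hθ hmin 1 μ' μstar
    rw [one_mul, pow_one, hiter' M, hiter M] at hcon
    have htv2 : tvDist μ' μstar ≤ 2 := DoeblinAux.tvDist_le_two _ _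
    have htvne : tvDist μ' μstar ≠ ⊤ := (lt_of_le_of_lt htv2 (by norm_num)).ne
    have htv0 : tvDist μ' μstar = 0 := by
      by_contra h0
      have hlt : ENNReal.ofReal (1 - θ) * tvDist μ' μstar < 1 * tvDist μ' μstar := by
        rw [mul_comm _ (tvDist μ' μstar), mul_comm 1 (tvDist μ' μstar)]; apply ENNReal.mul_lt_mul_right h0 htvne
        exact ENNReal.ofReal_lt_one.mpr (by linarith [hθ.1])
      rw [one_mul] at hlt
      exact absurd hcon (not_le.mpr hlt)
    exact DoeblinAux.eq_of_tvDist_zero htv0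
  exact ⟨μstar, ⟨hprob, hinv⟩, huniq, hbound⟩
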